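/- Let X be a compact Hausdorff topological space, let X₀ be a dense subset of X, and let A be a uniformly bounded set of continuous real-valued functions on X. Then the following are equivalent: (1) every function g : X → ℝ lying in the closure of A in the product topology on ℝ^X is continuous; (2) for every sequence (f_m) of elements of A and every sequence (x_n) of points of X₀, if for every n the limit c(n) = lim_m f_m(x_n) exists and lim_n c(n) exists, and for every m the limit d(m) = lim_n f_m(x_n) exists and lim_m d(m) exists, then lim_n c(n) = lim_m d(m). -/
import Mathlib

open Filter Topology

/-- A cluster point of a sequence converging to `b` in a `T2` space equals `b`. -/
lemma GDL.mapClusterPt_eq_of_tendsto {α X : Type*} [TopologicalSpace X] [T2Space X]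
    {F : Filter α} [F.NeBot] {u : α → X} {a b : X}
    (h : MapClusterPt a F u) (h' : Tendsto u F (𝓝 b)) : a = b :=
  eq_of_nhds_neBot (h.clusterPt.mono h')

/-- If `g` is "continuous through a dense set" at every point, then `g` is continuous. -/
lemma GDL.continuous_of_dense {X : Type*} [TopologicalSpace X] (X₀ : Set X) (hX₀ : Dense X₀)
    (g : X → ℝ)
    (h : ∀ p : X, ∀ ε > (0:ℝ), ∃ U : Set X, IsOpen U ∧ p ∈ U ∧ ∀ y ∈ U ∩ X₀, |g y - g p| < ε) :
    Continuous g := by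
  rw [continuous_iff_continuousAt]
  intro p
  rw [ContinuousAt, Metric.tendsto_nhds]
  intro ε hε
  obtain ⟨U, hUo, hpU, hU⟩ := h p (ε / 3) (by positivity)
  filter_upwards [hUo.mem_nhds hpU] with y hy
  obtain ⟨V, hVo, hyV, hV⟩ := h y (ε / 3) (by positivity)
  obtain ⟨z, ⟨hzU, hzV⟩, hzX₀⟩ := hX₀.inter_open_nonempty (U ∩ V) (hUo.inter hVo) ⟨y, hy, hyV⟩
  have h1 : |g z - g y| < ε / 3 := hV z ⟨hzV, hzX₀⟩
  have h2 : |g z - g p| < ε / 3 := hU z ⟨hzU, hzX₀⟩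
  rw [Real.dist_eq]
  calc |g y - g p| ≤ |g y - g z| + |g z - g p| := abs_sub_le _ _ _
    _ = |g z - g y| + |g z - g p| := by rw [abs_sub_comm]
    _ < ε / 3 + ε / 3 := by linarith
    _ < ε := by linarith

/-- Grothendieck's double limit theorem (special case for `C(X)`):
for a compact Hausdorff `X`, a dense `X₀ ⊆ X`, and a uniformly bounded family `A`
of continuous functions, every pointwise-closure point of `A` is continuous iff
the double limit condition holds for sequences from `A` and from `X₀`. -/
theorem grothendieck_double_limit {X : Type*} [TopologicalSpace X] [CompactSpace X] [T2Space X]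
    (X₀ : Set X) (hX₀ : Dense X₀)
    (A : Set (X → ℝ)) (hcont : ∀ f ∈ A, Continuous f)
    (C : ℝ) (hbd : ∀ f ∈ A, ∀ x, |f x| ≤ C) :
    (∀ g ∈ closure A, Continuous g) ↔
      (∀ (f : ℕ → X → ℝ), (∀ m, f m ∈ A) →
        ∀ (x : ℕ → X), (∀ n, x n ∈ X₀) →
        ∀ (c d : ℕ → ℝ) (r s : ℝ),
          (∀ n, Tendsto (fun m => f m (x n)) atTop (𝓝 (c n))) →
          Tendsto c atTop (𝓝 r) →
          (∀ m, Tendsto (fun n => f m (x n)) atTop (𝓝 (d m))) →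
          Tendsto d atTop (𝓝 s) →
          r = s) := by
  classical
  -- the big compact "cube"
  set S : Set (X → ℝ) := Set.univ.pi (fun _ : X => Set.Icc (-C) C) with hS
  have hScomp : IsCompact S := isCompact_univ_pi fun _ => isCompact_Icc
  have hAS : A ⊆ S := by
    intro h hh y _
    exact abs_le.mp (hbd h hh y)
  have hclosS : closure A ⊆ S := closure_minimal hAS hScomp.isClosed
  have hK : IsCompact (closure A) := hScomp.of_isClosed_subset isClosed_closure hclosS
  constructor
  · -- forward direction: via cluster points
    intro hA f hf x hx c d r s hc hcr hd hds
    have hmap : map f atTop ≤ 𝓟 (closure A) :=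
      tendsto_principal.mpr (Filter.Eventually.of_forall fun m => subset_closure (hf m))
    obtain ⟨g, hgA, hg⟩ := hK.exists_mapClusterPt hmap
    have hgcont : Continuous g := hA g hgA
    -- g (x n) = c n
    have hgx : ∀ n, g (x n) = c n := by
      intro n
      have h1 : MapClusterPt (g (x n)) atTop (fun m => f m (x n)) :=
        MapClusterPt.continuousAt_comp (continuous_apply (x n)).continuousAt hg
      exact GDL.mapClusterPt_eq_of_tendsto h1 (hc n)
    -- cluster point of the x sequence
    obtain ⟨p, hp⟩ := exists_clusterPt_of_compactSpace (map x atTop)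
    have hp' : MapClusterPt p atTop x := hp
    -- g p = r
    have hgr : g p = r := by
      have h1 : MapClusterPt (g p) atTop (g ∘ x) := MapClusterPt.continuousAt_comp hgcont.continuousAt hp'
      have h2 : Tendsto (g ∘ x) atTop (𝓝 r) := by
        have : g ∘ x = c := funext hgx
        rw [this]; exact hcr
      exact GDL.mapClusterPt_eq_of_tendsto h1 h2
    -- f m p = d m
    have hdm : ∀ m, f m p = d m := by
      intro m
      have h1 : MapClusterPt (f m p) atTop (f m ∘ x) :=
        MapClusterPt.continuousAt_comp (hcont (f m) (hf m)).continuousAt hp'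
      exact GDL.mapClusterPt_eq_of_tendsto h1 (hd m)
    -- g p = s
    have hgs : g p = s := by
      have h1 : MapClusterPt (g p) atTop (fun m => f m p) :=
        MapClusterPt.continuousAt_comp (continuous_apply p).continuousAt hg
      have h2 : Tendsto (fun m => f m p) atTop (𝓝 s) := by
        have : (fun m => f m p) = d := funext hdm
        rw [this]; exact hds
      exact GDL.mapClusterPt_eq_of_tendsto h1 h2
    rw [← hgr, hgs]
  · -- backward direction
    intro hcond g hg
    have hgbd : ∀ y, |g y| ≤ C := fun y => abs_le.mpr (hclosS hg y (Set.mem_univ y))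
    apply GDL.continuous_of_dense X₀ hX₀
    by_contra hnot
    push_neg at hnot
    obtain ⟨p, ε, hε, hwit⟩ := hnot
    -- hwit : ∀ U, IsOpen U → p ∈ U → ∃ y ∈ U ∩ X₀, ε ≤ |g y - g p|
    set P : ℝ × (X → ℝ) × X → Prop := fun a =>
      0 < a.1 ∧ a.1 ≤ 1 ∧ a.2.1 ∈ A ∧ a.2.2 ∈ X₀ ∧ ε ≤ |g a.2.2 - g p| ∧
        |a.2.1 p - g p| < a.1 ∧ |a.2.1 a.2.2 - a.2.1 p| < a.1 with hPdef
    set R : ℝ × (X → ℝ) × X → ℝ × (X → ℝ) × X → Prop := fun a b =>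
      b.1 ≤ a.1 / 2 ∧ |b.2.1 a.2.2 - g a.2.2| < b.1 ∧ |a.2.1 b.2.2 - a.2.1 p| < b.1 with hRdef
    have step : ∀ s : Finset (ℝ × (X → ℝ) × X), (∀ a ∈ s, P a) → ∃ b, P b ∧ ∀ a ∈ s, R a b := by
      intro s hs
      set t : Finset ℝ := insert (1 : ℝ) (s.image Prod.fst) with ht
      have htne : t.Nonempty := ⟨1, Finset.mem_insert_self _ _⟩
      set δ : ℝ := t.min' htne / 2 with hδ
      have hδpos : 0 < δ := by
        have : 0 < t.min' htne := by
          have hm := t.min'_mem htne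
          rcases Finset.mem_insert.mp hm with h1 | h1
          · rw [h1]; norm_num
          · obtain ⟨a, ha, ha'⟩ := Finset.mem_image.mp h1
            rw [← ha']; exact (hs a ha).1
        positivity
      have hδ1 : δ ≤ 1 / 2 := by
        have : t.min' htne ≤ 1 := Finset.min'_le t 1 (Finset.mem_insert_self _ _)
        rw [hδ]; linarith
      have hδa : ∀ a ∈ s, δ ≤ a.1 / 2 := by
        intro a ha
        have : t.min' htne ≤ a.1 :=
          Finset.min'_le t a.1 (Finset.mem_insert.mpr (Or.inr (Finset.mem_image_of_mem _ ha)))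
        rw [hδ]; linarith
      -- choose f ∈ A close to g at p and at previous points
      set W : Set (X → ℝ) := ((fun h : X → ℝ => h p) ⁻¹' Metric.ball (g p) δ) ∩
          ⋂ a ∈ s, ((fun h : X → ℝ => h a.2.2) ⁻¹' Metric.ball (g a.2.2) δ) with hW
      have hWopen : IsOpen W := by
        apply IsOpen.inter
        · exact Metric.isOpen_ball.preimage (continuous_apply p)
        · exact isOpen_biInter_finset fun a _ =>
            Metric.isOpen_ball.preimage (continuous_apply a.2.2)
      have hgW : g ∈ W := by
        constructor
        · simp [Metric.mem_ball]; exact hδpos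
        · simp only [Set.mem_iInter]
          intro a _
          simp [Metric.mem_ball]; exact hδpos
      obtain ⟨f0, hf0W, hf0A⟩ := mem_closure_iff.mp hg W hWopen hgW
      have hf0p : |f0 p - g p| < δ := by
        have := hf0W.1
        rwa [Set.mem_preimage, Metric.mem_ball, Real.dist_eq] at this
      have hf0a : ∀ a ∈ s, |f0 a.2.2 - g a.2.2| < δ := by
        intro a ha
        have := hf0W.2
        simp only [Set.mem_iInter] at this
        have := this a ha
        rwa [Set.mem_preimage, Metric.mem_ball, Real.dist_eq] at this
      -- choose the new point in X₀ near p
      set V : Set X := (f0 ⁻¹' Metric.ball (f0 p) δ) ∩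
          ⋂ a ∈ s, (a.2.1 ⁻¹' Metric.ball (a.2.1 p) δ) with hV
      have hVopen : IsOpen V := by
        apply IsOpen.inter
        · exact Metric.isOpen_ball.preimage (hcont f0 hf0A)
        · exact isOpen_biInter_finset fun a ha =>
            Metric.isOpen_ball.preimage (hcont a.2.1 (hs a ha).2.2.1)
      have hpV : p ∈ V := by
        constructor
        · simp [Metric.mem_ball]; exact hδpos
        · simp only [Set.mem_iInter]
          intro a _
          simp [Metric.mem_ball]; exact hδpos
      obtain ⟨x0, ⟨hx0V, hx0X₀⟩, hx0g⟩ := hwit V hVopen hpV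
      have hx0f0 : |f0 x0 - f0 p| < δ := by
        have := hx0V.1
        rwa [Set.mem_preimage, Metric.mem_ball, Real.dist_eq] at this
      have hx0a : ∀ a ∈ s, |a.2.1 x0 - a.2.1 p| < δ := by
        intro a ha
        have := hx0V.2
        simp only [Set.mem_iInter] at this
        have := this a ha
        rwa [Set.mem_preimage, Metric.mem_ball, Real.dist_eq] at this
      refine ⟨(δ, f0, x0), ⟨hδpos, by linarith, hf0A, hx0X₀, hx0g, hf0p, hx0f0⟩, ?_⟩
      intro a ha
      exact ⟨hδa a ha, hf0a a ha, hx0a a ha⟩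
    obtain ⟨F, hFP, hFR⟩ := exists_seq_of_forall_finset_exists P R step
    set δq : ℕ → ℝ := fun n => (F n).1 with hδq
    set fq : ℕ → X → ℝ := fun n => (F n).2.1 with hfq
    set xq : ℕ → X := fun n => (F n).2.2 with hxq
    -- δq n ≤ (1/2)^n and δq → 0
    have hδle : ∀ n, δq n ≤ (1 / 2) ^ n := by
      intro n
      induction n with
      | zero => simpa using (hFP 0).2.1
      | succ n ih =>
        have h1 : δq (n + 1) ≤ δq n / 2 := (hFR n (n + 1) (Nat.lt_succ_self n)).1
        have : (1 / 2 : ℝ) ^ (n + 1) = (1 / 2) ^ n / 2 := by ring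
        rw [this]; linarith
    have hδ0 : Tendsto δq atTop (𝓝 0) := by
      apply squeeze_zero (fun n => (hFP n).1.le) hδle
      exact tendsto_pow_atTop_nhds_zero_of_lt_one (by norm_num) (by norm_num)
    -- column limits: fq m (xq n) → g (xq n) as m → ∞
    have hcol : ∀ n, Tendsto (fun m => fq m (xq n)) atTop (𝓝 (g (xq n))) := by
      intro n
      rw [tendsto_iff_dist_tendsto_zero]
      apply squeeze_zero' (Filter.Eventually.of_forall fun m => dist_nonneg)
        (eventually_atTop.mpr ⟨n + 1, fun m hm => ?_⟩) hδ0
      rw [Real.dist_eq]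
      exact ((hFR n m (Nat.lt_of_succ_le hm)).2.1).le
    -- row limits: fq m (xq n) → fq m p as n → ∞
    have hrow : ∀ m, Tendsto (fun n => fq m (xq n)) atTop (𝓝 (fq m p)) := by
      intro m
      rw [tendsto_iff_dist_tendsto_zero]
      apply squeeze_zero' (Filter.Eventually.of_forall fun n => dist_nonneg)
        (eventually_atTop.mpr ⟨m, fun n hn => ?_⟩) hδ0
      rw [Real.dist_eq]
      rcases eq_or_lt_of_le hn with h | h
      · rw [← h]
        exact ((hFP m).2.2.2.2.2.2).le
      · exact ((hFR m n h).2.2).le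
    -- fq m p → g p
    have hdiag : Tendsto (fun m => fq m p) atTop (𝓝 (g p)) := by
      rw [tendsto_iff_dist_tendsto_zero]
      apply squeeze_zero' (Filter.Eventually.of_forall fun m => dist_nonneg)
        (Filter.Eventually.of_forall fun m => ?_) hδ0
      rw [Real.dist_eq]
      exact ((hFP m).2.2.2.2.2.1).le
    -- extract a convergent subsequence of (g (xq n))
    obtain ⟨r0, _, φ, hφ, hφlim⟩ := isCompact_Icc.tendsto_subseq
      (x := fun n => g (xq n)) (s := Set.Icc (-C) C) (fun n => abs_le.mp (hgbd (xq n)))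
    -- apply the double limit condition
    have hr0 : r0 = g p := by
      apply hcond fq (fun m => (hFP m).2.2.1) (xq ∘ φ) (fun n => (hFP (φ n)).2.2.2.1)
        ((fun n => g (xq n)) ∘ φ) (fun m => fq m p) r0 (g p)
      · intro n
        exact hcol (φ n)
      · exact hφlim
      · intro m
        exact (hrow m).comp hφ.tendsto_atTop
      · exact hdiag
    -- but all values g (xq n) are ε-far from g p
    have hfar : ε ≤ |r0 - g p| := by
      have hcont' : Tendsto (fun k => |g (xq (φ k)) - g p|) atTop (𝓝 (|r0 - g p|)) := by
        have : Continuous fun t : ℝ => |t - g p| := (continuous_id.sub continuous_const).abs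
        exact (this.continuousAt).tendsto.comp hφlim
      exact ge_of_tendsto hcont'
        (Filter.Eventually.of_forall fun k => (hFP (φ k)).2.2.2.2.1)
    rw [hr0, sub_self, abs_zero] at hfar
    linarith
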